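/- Let (X,B,b) be a coarse proximity space. Then the relation φ on subsets of X, defined by A φ B iff (every unbounded subset B' of B satisfies A b B', and every unbounded subset A' of A satisfies A' b B), is an equivalence relation on the power set of X. -/
import Mathlib


open Set

universe u
variable {X : Type u}

/-- The axioms of a coarse proximity structure: a bornology `B` (contains singletons,
closed under subsets and finite unions) and a relation `b` satisfying symmetry,
unboundedness of related sets, relatedness of sets with unbounded intersection,
the union axiom, and the strong axiom. -/
structure IsCoarseProximity (B : Set (Set X)) (b : Set X → Set X → Prop) : Prop where
  singleton_mem : ∀ x : X, {x} ∈ B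
  subset_mem : ∀ A C : Set X, A ∈ B → C ⊆ A → C ∈ B
  union_mem : ∀ A C : Set X, A ∈ B → C ∈ B → A ∪ C ∈ B
  symm : ∀ A C : Set X, b A C → b C A
  unbounded_of_rel : ∀ A C : Set X, b A C → A ∉ B ∧ C ∉ B
  rel_of_inter : ∀ A C : Set X, A ∩ C ∉ B → b A C
  union_iff : ∀ A C D : Set X, b (A ∪ C) D ↔ b A D ∨ b C D
  strong : ∀ A C : Set X, ¬ b A C → ∃ E : Set X, ¬ b A E ∧ ¬ b (univ \ E) C

/-- A coarse proximity space structure on `X`. -/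
structure CoarseProximity (X : Type u) where
  B : Set (Set X)
  b : Set X → Set X → Prop
  isCP : IsCoarseProximity B b

/-- The weak asymptotic resemblance induced by a coarse proximity. -/
def phi (cp : CoarseProximity X) (A C : Set X) : Prop :=
  (∀ C' ⊆ C, C' ∉ cp.B → cp.b A C') ∧ (∀ A' ⊆ A, A' ∉ cp.B → cp.b A' C)

/-- Monotonicity of `b` in the second argument. -/
lemma b_mono (cp : CoarseProximity X) {A S E : Set X} (h : cp.b A S) (hSE : S ⊆ E) :
    cp.b A E := by
  have : cp.b (S ∪ (E \ S)) A := (cp.isCP.union_iff S (E \ S) A).mpr (Or.inl (cp.isCP.symm _ _ h))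
  rw [Set.union_diff_cancel hSE] at this
  exact cp.isCP.symm _ _ this

lemma phi_symm (cp : CoarseProximity X) {A C : Set X} (h : phi cp A C) : phi cp C A :=
  ⟨fun A' hA' hub => cp.isCP.symm _ _ (h.2 A' hA' hub),
   fun C' hC' hub => cp.isCP.symm _ _ (h.1 C' hC' hub)⟩

lemma phi_trans_aux (cp : CoarseProximity X) {A B C : Set X}
    (hAB : phi cp A B) (hBC : phi cp B C) :
    ∀ C' ⊆ C, C' ∉ cp.B → cp.b A C' := by
  intro C' hC' hub
  by_contra hnb
  obtain ⟨E, hAE, hEC⟩ := cp.isCP.strong A C' hnb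
  have hB : cp.b B C' := hBC.1 C' hC' hub
  have : cp.b ((B ∩ E) ∪ (B \ E)) C' := by
    rwa [Set.inter_union_diff] at *
  rcases (cp.isCP.union_iff _ _ _).mp this with h1 | h2
  · have hub' : B ∩ E ∉ cp.B := (cp.isCP.unbounded_of_rel _ _ h1).1
    have : cp.b A (B ∩ E) := hAB.1 (B ∩ E) Set.inter_subset_left hub'
    exact hAE (b_mono cp this Set.inter_subset_right)
  · have : cp.b (univ \ E) C' :=
      cp.isCP.symm _ _ (b_mono cp (cp.isCP.symm _ _ h2)
        (fun x hx => ⟨trivial, hx.2⟩))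
    exact hEC this

/-- The weak asymptotic resemblance `φ` is an equivalence relation
on the power set of `X`. -/
theorem phi_equivalence (cp : CoarseProximity X) : Equivalence (phi cp) := by
  constructor
  · intro A
    constructor
    · intro C' hC' hub
      apply cp.isCP.rel_of_inter
      rwa [Set.inter_eq_self_of_subset_right hC']
    · intro A' hA' hub
      apply cp.isCP.rel_of_inter
      rwa [Set.inter_eq_self_of_subset_left hA']
  · exact fun h => phi_symm cp h
  · intro A B C hAB hBC
    refine ⟨phi_trans_aux cp hAB hBC, fun A' hA' hub => ?_⟩
    exact cp.isCP.symm _ _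
      (phi_trans_aux cp (phi_symm cp hBC) (phi_symm cp hAB) A' hA' hub)
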